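/- Let z, ω ∈ ℝ with z > 0 and ω > 0. Define F_z : ℝ × ℝ → ℝ by F_z(a, b) = exp((b − a)·log z)/(z + 1) · (z if b < a, and −1 if a ≤ b), and similarly F_ω with ω in place of z. Then ∫₀¹ ∫₀¹ τ(τ − 1)·F_z(σ, τ)·F_z(τ, σ)·F_ω(σ, τ)·F_ω(τ, σ) dσ dτ = −z·ω/(6(z + 1)²(ω + 1)²). -/

import Mathlib

/-- Mixed-flavor worldline integral from the `a₃` Seeley–DeWitt computation: with the two
`N = 2` fermionic propagators `F_z` and `F_ω` and the coincident-point bosonic propagator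
`τ(τ−1)`, one has
`∫₀¹∫₀¹ τ(τ−1)·F_z(σ,τ)·F_z(τ,σ)·F_ω(σ,τ)·F_ω(τ,σ) dσ dτ = −zω/(6(z+1)²(ω+1)²)`. -/
theorem worldline_integral_mixed_flavor (z ω : ℝ) (hz : 0 < z) (hω : 0 < ω)
    (Fz Fω : ℝ × ℝ → ℝ)
    (hFz : Fz = fun p => Real.exp ((p.2 - p.1) * Real.log z) / (z + 1) *
      (if p.2 < p.1 then z else -1))
    (hFω : Fω = fun p => Real.exp ((p.2 - p.1) * Real.log ω) / (ω + 1) *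
      (if p.2 < p.1 then ω else -1)) :
    (∫ τ in (0 : ℝ)..1, ∫ σ in (0 : ℝ)..1,
        τ * (τ - 1) * Fz (σ, τ) * Fz (τ, σ) * Fω (σ, τ) * Fω (τ, σ)) =
      -(z * ω) / (6 * (z + 1) ^ 2 * (ω + 1) ^ 2) := by
  have hz1 : z + 1 ≠ 0 := by positivity
  have hw1 : ω + 1 ≠ 0 := by positivity
  set C : ℝ := z * ω / ((z + 1) ^ 2 * (ω + 1) ^ 2) with hC
  have hkey : ∀ τ : ℝ,
      (∫ σ in (0 : ℝ)..1,
        τ * (τ - 1) * Fz (σ, τ) * Fz (τ, σ) * Fω (σ, τ) * Fω (τ, σ)) =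
      τ * (τ - 1) * C := by
    intro τ
    have hpt : ∀ σ : ℝ, σ ≠ τ →
        τ * (τ - 1) * Fz (σ, τ) * Fz (τ, σ) * Fω (σ, τ) * Fω (τ, σ)
          = τ * (τ - 1) * C := by
      intro σ hστ
      have he : Real.exp ((τ - σ) * Real.log z) * Real.exp ((σ - τ) * Real.log z) = 1 := by
        rw [← Real.exp_add, show (τ - σ) * Real.log z + (σ - τ) * Real.log z = 0 by ring,
          Real.exp_zero]
      have hf : Real.exp ((τ - σ) * Real.log ω) * Real.exp ((σ - τ) * Real.log ω) = 1 := by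
        rw [← Real.exp_add, show (τ - σ) * Real.log ω + (σ - τ) * Real.log ω = 0 by ring,
          Real.exp_zero]
      rcases lt_or_gt_of_ne hστ with h | h
      · simp only [hFz, hFω, h, not_lt.2 h.le, if_true, if_false, not_lt_of_gt h]
        rw [hC]
        field_simp
        rw [mul_comm (Real.log z) (σ - τ)]
        linear_combination (τ*(τ-1)*
            (Real.exp ((τ-σ)*Real.log ω) * Real.exp ((σ-τ)*Real.log ω)))*he +
          (τ*(τ-1))*hf
      · simp only [hFz, hFω, h, not_lt.2 h.le, if_true, if_false, not_lt_of_gt h]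
        rw [hC]
        field_simp
        rw [mul_comm (Real.log z) (σ - τ)]
        linear_combination (τ*(τ-1)*
            (Real.exp ((τ-σ)*Real.log ω) * Real.exp ((σ-τ)*Real.log ω)))*he +
          (τ*(τ-1))*hf
    have : (∫ σ in (0 : ℝ)..1,
        τ * (τ - 1) * Fz (σ, τ) * Fz (τ, σ) * Fω (σ, τ) * Fω (τ, σ)) =
        ∫ σ in (0 : ℝ)..1, τ * (τ - 1) * C := by
      apply intervalIntegral.integral_congr_ae
      have hmeas : (MeasureTheory.volume : MeasureTheory.Measure ℝ) {τ} = 0 :=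
        MeasureTheory.measure_singleton τ
      filter_upwards [MeasureTheory.measure_eq_zero_iff_ae_notMem.mp hmeas] with σ hσ _
      exact hpt σ hσ
    rw [this]
    simp
  simp_rw [hkey]
  have h1 : (∫ τ in (0 : ℝ)..1, τ * (τ - 1) * C)
      = (∫ τ in (0 : ℝ)..1, (τ ^ 2 - τ)) * C := by
    rw [← intervalIntegral.integral_mul_const]
    congr 1; ext τ; ring
  rw [h1]
  have h2 : (∫ τ in (0 : ℝ)..1, (τ ^ 2 - τ : ℝ)) = -(1/6 : ℝ) := by
    rw [intervalIntegral.integral_sub ((continuous_pow 2).intervalIntegrable 0 1)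
      (continuous_id'.intervalIntegrable 0 1)]
    norm_num [integral_pow, integral_id]
  rw [h2, hC]
  field_simp
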